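/- For 0 < R ≤ α ≤ 1, the α-list decoding capacity ρ_α(R) is at most 1 - R/α: any sequence of (n, Rn) codes correcting ρn errors under polynomial-size list decoding while downloading an α-fraction must satisfy ρ ≤ 1 - R/α + o(1). -/

import Mathlib

-- lemma C
lemma auxC (k : ℕ) : (k+1)^2 ≤ 4^k := by
  induction k with
  | zero => norm_num
  | succ k ih =>
    have e2 : (1:ℕ) ≤ 4^k := Nat.one_le_pow _ _ (by norm_num)
    have : 4^(k+1) = 4 * 4^k := by ring
    nlinarith

lemma auxB (n : ℕ) : Nat.log 2 n ≤ 2 * Nat.sqrt n := by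
  rcases Nat.eq_zero_or_pos n with h | h
  · simp [h]
  have h1 : n < 2 ^ (2 * Nat.sqrt n) := by
    have := auxC (Nat.sqrt n)
    have h2 : n < (Nat.sqrt n + 1)^2 := Nat.lt_succ_sqrt' n
    calc n < (Nat.sqrt n + 1)^2 := h2
      _ ≤ 4 ^ Nat.sqrt n := auxC _
      _ = 2 ^ (2 * Nat.sqrt n) := by rw [pow_mul]; norm_num
  exact le_of_lt (Nat.log_lt_of_lt_pow h.ne' h1)

lemma auxA (j n : ℕ) (h : (3*j*j+1)^2 ≤ n) : j * (j * (2 * Nat.sqrt n + 1)) ≤ n := by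
  have hq : 3*j*j+1 ≤ Nat.sqrt n := Nat.le_sqrt.mpr (by nlinarith)
  have hq2 : Nat.sqrt n * Nat.sqrt n ≤ n := by have := Nat.sqrt_le' n; nlinarith
  nlinarith [hq, hq2]

-- asymptotic lemma
lemma auxAsym (m : ℕ) (c : ℝ) (hc : 0 < c) :
    ∃ N : ℕ, ∀ n : ℕ, N ≤ n → (m : ℝ) * (Nat.log 2 n + 1) ≤ c * n := by
  obtain ⟨j, hj1, hj2⟩ : ∃ j : ℕ, (m ≤ j ∧ 1 ≤ c * j) := by
    refine ⟨m + ⌈1/c⌉₊ + 1, by omega, ?_⟩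
    have h1 : (1:ℝ)/c ≤ ⌈1/c⌉₊ := Nat.le_ceil _
    have : (1:ℝ)/c ≤ (m + ⌈1/c⌉₊ + 1 : ℕ) := by push_cast; linarith [Nat.cast_nonneg (α:=ℝ) m]
    rw [div_le_iff₀ hc] at this
    linarith
  refine ⟨(3*j*j+1)^2, fun n hn => ?_⟩
  have hA := auxA j n hn
  have hB : Nat.log 2 n + 1 ≤ 2 * Nat.sqrt n + 1 := by have := auxB n; omega
  have key : j * (m * (Nat.log 2 n + 1)) ≤ n := by
    calc j * (m * (Nat.log 2 n + 1)) ≤ j * (j * (2 * Nat.sqrt n + 1)) := by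
          exact Nat.mul_le_mul_left _ (Nat.mul_le_mul hj1 hB)
      _ ≤ n := hA
  have hj0 : (0:ℝ) < j := by
    by_contra h
    push_neg at h
    have : (j:ℝ) = 0 := le_antisymm h (Nat.cast_nonneg _)
    rw [this] at hj2; linarith
  have key' : (j:ℝ) * ((m:ℝ) * (Nat.log 2 n + 1)) ≤ n := by
    have := (Nat.cast_le (α := ℝ)).mpr key
    push_cast at this ⊢
    linarith
  have h2 : (m:ℝ) * (Nat.log 2 n + 1) ≤ (n:ℝ) / j := by
    rw [le_div_iff₀ hj0]; linarith [key']
  calc (m:ℝ) * (Nat.log 2 n + 1) ≤ (n:ℝ)/j := h2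
    _ ≤ c * n := by
        rw [div_le_iff₀ hj0]
        have h3 : (1:ℝ) * n ≤ (c * j) * n :=
          mul_le_mul_of_nonneg_right hj2 (Nat.cast_nonneg n)
        nlinarith

lemma auxSel (n s : ℕ) (a : Fin n → ℕ) (hs : s ≤ n) :
    ∃ I : Finset (Fin n), I.card = s ∧ ∀ i ∈ I, ∀ j ∉ I, a i ≤ a j := by
  induction s with
  | zero => exact ⟨∅, rfl, by simp⟩
  | succ s ih =>
    obtain ⟨I, hcard, hsep⟩ := ih (Nat.le_of_succ_le hs)
    have hne : Iᶜ.Nonempty := by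
      rw [← Finset.card_pos, Finset.card_compl, hcard]
      simp only [Fintype.card_fin]
      omega
    obtain ⟨i, hi, hmin⟩ := Finset.exists_min_image Iᶜ a hne
    have hiI : i ∉ I := Finset.mem_compl.mp hi
    refine ⟨insert i I, by rw [Finset.card_insert_of_notMem hiI, hcard], ?_⟩
    intro x hx y hy
    have hyI : y ∉ I := fun h => hy (Finset.mem_insert_of_mem h)
    rcases Finset.mem_insert.mp hx with h | h
    · subst h; exact hmin y (Finset.mem_compl.mpr hyI)
    · exact hsep x h y hyI

lemma auxSum (n : ℕ) (I : Finset (Fin n)) (a : Fin n → ℕ)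
    (hsep : ∀ i ∈ I, ∀ j ∉ I, a i ≤ a j) :
    n * ∑ i ∈ I, a i ≤ I.card * ∑ i, a i := by
  have h1 : Iᶜ.card * ∑ i ∈ I, a i ≤ I.card * ∑ j ∈ Iᶜ, a j := by
    calc Iᶜ.card * ∑ i ∈ I, a i = ∑ _j ∈ Iᶜ, ∑ i ∈ I, a i := by
          rw [Finset.sum_const, smul_eq_mul]
      _ ≤ ∑ j ∈ Iᶜ, ∑ _i ∈ I, a j :=
          Finset.sum_le_sum (fun j hj => Finset.sum_le_sum
            (fun i hi => hsep i hi j (Finset.mem_compl.mp hj)))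
      _ = I.card * ∑ j ∈ Iᶜ, a j := by
          simp only [Finset.sum_const, smul_eq_mul, Finset.mul_sum, mul_comm]
  have h2 : ∑ i ∈ I, a i + ∑ i ∈ Iᶜ, a i = ∑ i, a i := Finset.sum_add_sum_compl I a
  have h3 : I.card + Iᶜ.card = n := by
    rw [Finset.card_add_card_compl]; exact Fintype.card_fin n
  have h4 : n * ∑ i ∈ I, a i = I.card * ∑ i ∈ I, a i + Iᶜ.card * ∑ i ∈ I, a i := by
    rw [← add_mul, h3]
  calc n * ∑ i ∈ I, a i = I.card * ∑ i ∈ I, a i + Iᶜ.card * ∑ i ∈ I, a i := h4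
    _ ≤ I.card * ∑ i ∈ I, a i + I.card * ∑ j ∈ Iᶜ, a j := Nat.add_le_add_left h1 _
    _ = I.card * ∑ i, a i := by rw [← h2]; ring
-- counting lemma test
lemma auxCount (n l L : ℕ) (F : Type) [Field F] [Fintype F] [DecidableEq F]
    (a : Fin n → ℕ) (I : Finset (Fin n))
    (𝒞 : Finset (Fin n → Fin l → F))
    (f : (i : Fin n) → (Fin l → F) → (Fin (a i) → F))
    (g : Fin L → ((i : Fin n) → Fin (a i) → F) → (Fin n → Fin l → F))
    (t : ℕ) (htI : Iᶜ.card ≤ t)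
    (hdec : ∀ C ∈ 𝒞, ∀ E : Fin n → Fin l → F,
        (Finset.univ.filter fun i => E i ≠ 0).card ≤ t →
        ∃ j : Fin L, g j (fun i => f i (C i + E i)) = C) :
    𝒞.card ≤ L * Fintype.card F ^ (∑ i ∈ I, a i) := by
  classical
  let dec : Fin L × ((i : {x // x ∈ I}) → Fin (a i.1) → F) → (Fin n → Fin l → F) :=
    fun p => g p.1 (fun i => if h : i ∈ I then p.2 ⟨i, h⟩ else f i 0)
  have hsub : 𝒞 ⊆ Finset.image dec Finset.univ := by
    intro C hC
    set E : Fin n → Fin l → F := fun i => if i ∈ I then 0 else -C i with hE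
    have hwt : (Finset.univ.filter fun i => E i ≠ 0).card ≤ t := by
      refine le_trans (Finset.card_le_card ?_) htI
      intro i hi
      simp only [Finset.mem_filter, hE, ne_eq] at hi
      rw [Finset.mem_compl]
      intro hiI
      exact hi.2 (by simp [hiI])
    obtain ⟨j, hj⟩ := hdec C hC E hwt
    rw [Finset.mem_image]
    refine ⟨⟨j, fun i => f i.1 (C i.1 + E i.1)⟩, Finset.mem_univ _, ?_⟩
    show g j (fun i => if h : i ∈ I then f i (C i + E i) else f i 0) = C
    have : (fun i => if h : i ∈ I then f i (C i + E i) else f i 0)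
         = (fun i => f i (C i + E i)) := by
      funext i
      by_cases h : i ∈ I
      · simp [h]
      · have : C i + E i = 0 := by simp [hE, h]
        simp [h, this]
    rw [this, hj]
  calc 𝒞.card ≤ (Finset.image dec Finset.univ).card := Finset.card_le_card hsub
    _ ≤ (Finset.univ : Finset (Fin L × ((i : {x // x ∈ I}) → Fin (a i.1) → F))).card :=
        Finset.card_image_le
    _ = L * Fintype.card F ^ (∑ i ∈ I, a i) := by
        rw [Finset.card_univ, Fintype.card_prod, Fintype.card_fin, Fintype.card_pi]
        congr 1
        calc ∏ i : {x // x ∈ I}, Fintype.card (Fin (a i.1) → F)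
            = ∏ i : {x // x ∈ I}, Fintype.card F ^ (a i.1) := by
              congr 1; funext i; rw [Fintype.card_fun, Fintype.card_fin]
          _ = ∏ i ∈ I, Fintype.card F ^ a i := Finset.prod_coe_sort I (fun i => Fintype.card F ^ a i)
          _ = Fintype.card F ^ (∑ i ∈ I, a i) := by
              rw [← Finset.prod_pow_eq_pow_sum]

/-- The α-list decoding capacity is at most `1 - R/α`: for every list-size exponent `m`,
rate `R`, download fraction `α` with `0 < R ≤ α ≤ 1`, and every `ε > 0`, there is `N`
such that for all `n ≥ N`, any `(n, k, l)` array code over any finite field `F` with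
`k ≥ R n`, correcting `t` errors under list-of-`L` decoding with polynomial list size
`L ≤ n^m` while downloading at most an `α`-fraction (`∑ i, a i ≤ α n l` downloaded
symbols) of the codeword, must satisfy `t ≤ (1 - R/α + ε) n`; i.e. the normalized
radius is at most `1 - R/α + o(1)`. -/
theorem alpha_list_decoding_capacity_upper_bound
    (m : ℕ) (R α ε : ℝ) (hR : 0 < R) (hRα : R ≤ α) (hα : α ≤ 1) (hε : 0 < ε) :
    ∃ N : ℕ, ∀ n : ℕ, N ≤ n →
      ∀ (F : Type) [Field F] [Fintype F] [DecidableEq F],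
      ∀ (k l t L : ℕ), 0 < l → t ≤ n → L ≤ n ^ m → R * n ≤ (k : ℝ) →
      ∀ 𝒞 : Finset (Fin n → Fin l → F), 𝒞.card = Fintype.card F ^ (k * l) →
      ∀ a : Fin n → ℕ, (∑ i : Fin n, (a i : ℝ)) ≤ α * n * l →
      ∀ (f : (i : Fin n) → (Fin l → F) → (Fin (a i) → F))
        (g : Fin L → ((i : Fin n) → Fin (a i) → F) → (Fin n → Fin l → F)),
      (∀ C ∈ 𝒞, ∀ E : Fin n → Fin l → F,
        (Finset.univ.filter fun i => E i ≠ 0).card ≤ t →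
        ∃ j : Fin L, g j (fun i => f i (C i + E i)) = C) →
      (t : ℝ) ≤ (1 - R / α + ε) * n := by
  have hα0 : 0 < α := lt_of_lt_of_le hR hRα
  obtain ⟨N0, hN0⟩ := auxAsym m (ε * α) (mul_pos hε hα0)
  refine ⟨max N0 1, fun n hn F _ _ _ k l t L hl ht hL hk 𝒞 hcard a ha f g hdec => ?_⟩
  have hn1 : 1 ≤ n := le_trans (le_max_right _ _) hn
  have hn0 : (0:ℝ) < n := by exact_mod_cast hn1
  classical
  -- select the n - t coordinates with smallest download
  obtain ⟨I, hIcard, hsep⟩ := auxSel n (n - t) a (Nat.sub_le n t)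
  have htI : Iᶜ.card ≤ t := by
    rw [Finset.card_compl, hIcard, Fintype.card_fin]
    omega
  -- counting bound
  have hcount : Fintype.card F ^ (k * l) ≤ L * Fintype.card F ^ (∑ i ∈ I, a i) := by
    rw [← hcard]
    exact auxCount n l L F a I 𝒞 f g t htI hdec
  set q := Fintype.card F with hq
  have hq2 : 2 ≤ q := Fintype.one_lt_card
  set s' := ∑ i ∈ I, a i with hs'
  -- derive k * l ≤ s' + m * (log2 n + 1)
  have hkl : k * l ≤ s' + m * (Nat.log 2 n + 1) := by
    rcases le_or_gt (k * l) s' with h | h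
    · omega
    · have h1 : q ^ s' * q ^ (k * l - s') ≤ q ^ s' * n ^ m := by
        rw [← pow_add]
        rw [Nat.add_sub_cancel' h.le]
        calc q ^ (k * l) ≤ L * q ^ s' := hcount
          _ ≤ n ^ m * q ^ s' := Nat.mul_le_mul_right _ hL
          _ = q ^ s' * n ^ m := Nat.mul_comm _ _
      have h2 : q ^ (k * l - s') ≤ n ^ m :=
        Nat.le_of_mul_le_mul_left h1 (Nat.pow_pos (by omega))
      have h3 : 2 ^ (k * l - s') ≤ n ^ m :=
        le_trans (Nat.pow_le_pow_left hq2 _) h2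
      have h4 : n ^ m ≤ 2 ^ (m * (Nat.log 2 n + 1)) := by
        calc n ^ m ≤ (2 ^ (Nat.log 2 n + 1)) ^ m :=
              Nat.pow_le_pow_left (Nat.lt_pow_succ_log_self (by norm_num) n).le m
          _ = 2 ^ (m * (Nat.log 2 n + 1)) := by rw [← pow_mul, Nat.mul_comm]
      have h5 : k * l - s' ≤ m * (Nat.log 2 n + 1) :=
        (Nat.pow_le_pow_iff_right (by norm_num)).mp (le_trans h3 h4)
      omega
  -- real bound on s'
  have hsum : (n:ℝ) * s' ≤ (n - t) * (α * n * l) := by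
    have h1 : n * s' ≤ (n - t) * ∑ i, a i := hIcard ▸ auxSum n I a hsep
    have h2 : ((n * s' : ℕ) : ℝ) ≤ ((n - t : ℕ) : ℝ) * ∑ i : Fin n, (a i : ℝ) := by
      have := (Nat.cast_le (α := ℝ)).mpr h1
      push_cast at this ⊢
      linarith
    have h3 : ((n - t : ℕ) : ℝ) = (n : ℝ) - t := by
      rw [Nat.cast_sub ht]
    have h4 : (0:ℝ) ≤ (n:ℝ) - t := by
      rw [← h3]; exact Nat.cast_nonneg _
    calc (n:ℝ) * s' = ((n * s' : ℕ) : ℝ) := by push_cast; ring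
      _ ≤ ((n - t : ℕ) : ℝ) * ∑ i : Fin n, (a i : ℝ) := h2
      _ = ((n:ℝ) - t) * ∑ i : Fin n, (a i : ℝ) := by rw [h3]
      _ ≤ ((n:ℝ) - t) * (α * n * l) := mul_le_mul_of_nonneg_left ha h4
  have hs'le : (s' : ℝ) ≤ α * ((n:ℝ) - t) * l := by
    have := hsum
    rw [show ((n:ℝ) - t) * (α * n * l) = (n:ℝ) * (α * ((n:ℝ) - t) * l) by ring] at this
    exact le_of_mul_le_mul_left this hn0
  -- log term bound
  have hlog : (m : ℝ) * (Nat.log 2 n + 1) ≤ ε * α * n :=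
    hN0 n (le_trans (le_max_left _ _) hn)
  -- combine
  have hkl' : (k:ℝ) * l ≤ (s' : ℝ) + (m:ℝ) * (Nat.log 2 n + 1) := by
    exact_mod_cast hkl
  have hl1 : (1:ℝ) ≤ l := by exact_mod_cast hl
  have hεαn : (0:ℝ) ≤ ε * α * n := by positivity
  have hmain : R * n * l ≤ (α * ((n:ℝ) - t) + ε * α * n) * l := by
    calc R * n * l ≤ (k:ℝ) * l := by
          apply mul_le_mul_of_nonneg_right hk (by linarith)
      _ ≤ (s' : ℝ) + (m:ℝ) * (Nat.log 2 n + 1) := hkl'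
      _ ≤ α * ((n:ℝ) - t) * l + ε * α * n := by linarith
      _ ≤ α * ((n:ℝ) - t) * l + ε * α * n * l := by nlinarith
      _ = (α * ((n:ℝ) - t) + ε * α * n) * l := by ring
  have hmain2 : R * n ≤ α * ((n:ℝ) - t) + ε * α * n :=
    le_of_mul_le_mul_right (by linarith [hmain]) (by linarith : (0:ℝ) < l)
  rw [show (1 - R / α + ε) * n = ((α - R + ε * α) * n) / α by field_simp; try ring]
  rw [le_div_iff₀ hα0]
  nlinarith [hmain2]
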